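/- Let M > 0, A > 2, and let (a_ℓ)_{ℓ≥1} be nonnegative reals with ∑_{ℓ≥1} a_ℓ/(2M)^ℓ ≤ 1. Define, for k ≥ 1, b_k := k · ∑_{j=0}^{∞} A^{k+j} (√(CT))^{j+1} a_{k+j+1} where CT := 1/(4A²M²). Then ∑_{k≥1} b_k / (8AM)^k ≤ 1; consequently N((b_k)) ≤ 4AM, where N is the GP quasi-norm N((b_k)) = (1/2) inf{ λ>0 : ∑_k b_k/λ^k ≤ 1 }. -/

import Mathlib

open scoped ENNReal

/-- The Gross–Pitaevskii quasi-norm `N((b_k)) = (1/2)·inf{ λ > 0 : ∑_{k≥1} b_k/λ^k ≤ 1 }`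
for an `ℝ≥0∞`-valued sequence (indexed by `b (k+1)`, `k : ℕ`). -/
noncomputable def gpNormE (b : ℕ → ℝ≥0∞) : ℝ :=
  (1 / 2) * sInf {l : ℝ | 0 < l ∧ ∑' k : ℕ, b (k + 1) / ENNReal.ofReal (l ^ (k + 1)) ≤ 1}

/-- Let `M > 0`, `A > 2`, and `(a_ℓ)_{ℓ≥1}` nonnegative with
`∑_ℓ a_ℓ/(2M)^ℓ ≤ 1`.  With `CT := 1/(4A²M²)` define
`b_k := k · ∑_{j=0}^∞ A^{k+j} (√(CT))^{j+1} a_{k+j+1}`.  Then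
`∑_{k≥1} b_k/(8AM)^k ≤ 1`, and consequently `N((b_k)) ≤ 4AM`.
(Sums are taken in `ℝ≥0∞`; all terms are nonnegative.) -/
theorem stmt11 (A M : ℝ) (hA : 2 < A) (hM : 0 < M) (a : ℕ → ℝ) (ha : ∀ l, 0 ≤ a l)
    (hsum : ∑' l : ℕ, ENNReal.ofReal (a (l + 1) / (2 * M) ^ (l + 1)) ≤ 1)
    (b : ℕ → ℝ≥0∞)
    (hb : ∀ k : ℕ, b k = (k : ℝ≥0∞) *
      ∑' j : ℕ, ENNReal.ofReal (A ^ (k + j) * Real.sqrt (1 / (4 * A ^ 2 * M ^ 2)) ^ (j + 1)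
        * a (k + j + 1))) :
    (∑' k : ℕ, b (k + 1) / ENNReal.ofReal ((8 * A * M) ^ (k + 1)) ≤ 1) ∧
    gpNormE b ≤ 4 * A * M := by
  have hA0 : (0:ℝ) < A := by linarith
  have hr : Real.sqrt (1 / (4 * A ^ 2 * M ^ 2)) = 1 / (2 * A * M) := by
    rw [show 1 / (4 * A ^ 2 * M ^ 2) = (1 / (2 * A * M)) ^ 2 by field_simp; ring]
    exact Real.sqrt_sq (by positivity)
  have key : ∑' k : ℕ, b (k + 1) / ENNReal.ofReal ((8 * A * M) ^ (k + 1)) ≤ 1 := by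
    have hterm : ∀ k : ℕ, b (k + 1) / ENNReal.ofReal ((8 * A * M) ^ (k + 1))
        ≤ ENNReal.ofReal ((1/2 : ℝ) ^ (k + 1)) := by
      intro k
      have hc : (0:ℝ) < (8 * A * M) ^ (k + 1) := by positivity
      rw [hb (k+1), hr, div_eq_mul_inv, mul_assoc, ← ENNReal.tsum_mul_right,
        ← ENNReal.tsum_mul_left]
      have hstep : ∀ j : ℕ,
          (↑(k+1) : ℝ≥0∞) * (ENNReal.ofReal (A ^ (k + 1 + j) * (1 / (2 * A * M)) ^ (j + 1)
              * a (k + 1 + j + 1)) * (ENNReal.ofReal ((8 * A * M) ^ (k + 1)))⁻¹)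
            ≤ ENNReal.ofReal ((1/2 : ℝ) ^ (k + 1))
              * ENNReal.ofReal (a (k + 1 + j + 1) / (2 * M) ^ (k + 1 + j + 1)) := by
        intro j
        rw [← div_eq_mul_inv, ← ENNReal.ofReal_div_of_pos hc,
          show ((↑(k+1) : ℝ≥0∞)) = ENNReal.ofReal ((k:ℝ)+1) by
            rw [← ENNReal.ofReal_natCast (k+1)]; norm_num,
          ← ENNReal.ofReal_mul (by positivity), ← ENNReal.ofReal_mul (by positivity)]
        apply ENNReal.ofReal_le_ofReal
        have hkey : ((k:ℝ) + 1) * (A ^ (k + 1 + j) * (1 / (2 * A * M)) ^ (j + 1)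
              * a (k + 1 + j + 1) / (8 * A * M) ^ (k + 1))
            = (((k:ℝ) + 1) / (A * 2 ^ (k + 1)))
              * ((1/2 : ℝ) ^ (k + 1) * (a (k + 1 + j + 1) / (2 * M) ^ (k + 1 + j + 1))) := by
          have h8 : ∀ n : ℕ, (8:ℝ) ^ n = 2 ^ (n * 3) := fun n => by
            rw [mul_comm, pow_mul]; norm_num
          have h8' : ((8:ℝ) * A * M) ^ (k+1) = 2 ^ ((k+1) * 3) * A ^ (k+1) * M ^ (k+1) := by
            rw [mul_pow, mul_pow, h8]
          have hM0 : M ≠ 0 := hM.ne'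
          field_simp
          have hA0' : A ≠ 0 := hA0.ne'
          rw [show A * M * 8 = 8 * A * M by ring, h8', div_pow, one_pow, div_pow, one_pow]
          field_simp
          ring
        rw [hkey]
        have hle1 : ((k:ℝ) + 1) / (A * 2 ^ (k + 1)) ≤ 1 := by
          rw [div_le_one (by positivity)]
          have h1 : ((k:ℝ) + 1) ≤ 2 ^ (k + 1) := by
            have := (Nat.lt_two_pow_self (n := k+1))
            exact_mod_cast this.le
          nlinarith [pow_pos (show (0:ℝ) < 2 by norm_num) (k+1)]
        have hnn : (0:ℝ) ≤ (1/2 : ℝ) ^ (k + 1) * (a (k + 1 + j + 1) / (2 * M) ^ (k + 1 + j + 1)) :=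
          mul_nonneg (by positivity) (div_nonneg (ha _) (by positivity))
        nlinarith [mul_le_of_le_one_left hnn hle1]
      calc ∑' j : ℕ, (↑(k+1) : ℝ≥0∞) * (ENNReal.ofReal (A ^ (k + 1 + j)
              * (1 / (2 * A * M)) ^ (j + 1) * a (k + 1 + j + 1))
              * (ENNReal.ofReal ((8 * A * M) ^ (k + 1)))⁻¹)
          ≤ ∑' j : ℕ, ENNReal.ofReal ((1/2 : ℝ) ^ (k + 1))
              * ENNReal.ofReal (a (k + 1 + j + 1) / (2 * M) ^ (k + 1 + j + 1)) :=
            ENNReal.tsum_le_tsum hstep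
        _ = ENNReal.ofReal ((1/2 : ℝ) ^ (k + 1))
              * ∑' j : ℕ, ENNReal.ofReal (a ((k + 1 + j) + 1) / (2 * M) ^ ((k + 1 + j) + 1)) :=
            ENNReal.tsum_mul_left
        _ ≤ ENNReal.ofReal ((1/2 : ℝ) ^ (k + 1)) * 1 := by
            gcongr
            calc ∑' j : ℕ, ENNReal.ofReal (a ((k + 1 + j) + 1) / (2 * M) ^ ((k + 1 + j) + 1))
                ≤ ∑' l : ℕ, ENNReal.ofReal (a (l + 1) / (2 * M) ^ (l + 1)) :=
                  ENNReal.tsum_comp_le_tsum_of_injective (add_right_injective (k+1))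
                    (fun l => ENNReal.ofReal (a (l + 1) / (2 * M) ^ (l + 1)))
              _ ≤ 1 := hsum
        _ = ENNReal.ofReal ((1/2 : ℝ) ^ (k + 1)) := mul_one _
    calc ∑' k : ℕ, b (k + 1) / ENNReal.ofReal ((8 * A * M) ^ (k + 1))
        ≤ ∑' k : ℕ, ENNReal.ofReal ((1/2 : ℝ) ^ (k + 1)) := ENNReal.tsum_le_tsum hterm
      _ = ∑' k : ℕ, ((2:ℝ≥0∞)⁻¹) ^ (k + 1) := by
          congr 1; funext k
          rw [ENNReal.ofReal_pow (by norm_num),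
            show (1/2:ℝ) = (2:ℝ)⁻¹ by norm_num, ENNReal.ofReal_inv_of_pos (by norm_num)]
          norm_num
      _ = (2:ℝ≥0∞)⁻¹ * ∑' k : ℕ, ((2:ℝ≥0∞)⁻¹) ^ k := by
          simp_rw [pow_succ']; exact ENNReal.tsum_mul_left
      _ = 1 := by
          rw [ENNReal.tsum_geometric, ENNReal.one_sub_inv_two, inv_inv,
            ENNReal.inv_mul_cancel (by norm_num) (by norm_num)]
  refine ⟨key, ?_⟩
  have hmem : (8 * A * M) ∈ {l : ℝ | 0 < l ∧
      ∑' k : ℕ, b (k + 1) / ENNReal.ofReal (l ^ (k + 1)) ≤ 1} := ⟨by positivity, key⟩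
  have hbdd : BddBelow {l : ℝ | 0 < l ∧
      ∑' k : ℕ, b (k + 1) / ENNReal.ofReal (l ^ (k + 1)) ≤ 1} :=
    ⟨0, fun x hx => hx.1.le⟩
  have hinf := csInf_le hbdd hmem
  unfold gpNormE
  nlinarith [hinf]
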